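/- Let R̃ : ℝ → SO(3) be differentiable with R̃̇ = -[ω]_× R̃ for some ω : ℝ → ℝ³. Then d/dt ||R̃||_I = -(1/2) vex(P_a(R̃))ᵀ ω, where ||R̃||_I = (1/4)Tr(I₃ - R̃). -/
import Mathlib


open Matrix

/-- Hat map: skew-symmetric matrix with `hat y *ᵥ z = y × z`. -/
noncomputable def hat (y : Fin 3 → ℝ) : Matrix (Fin 3) (Fin 3) ℝ :=
  !![0, -y 2, y 1; y 2, 0, -y 0; -y 1, y 0, 0]

/-- Anti-symmetric projection. -/
noncomputable def Pa (A : Matrix (Fin 3) (Fin 3) ℝ) : Matrix (Fin 3) (Fin 3) ℝ :=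
  (1/2 : ℝ) • (A - Aᵀ)

/-- Inverse of the hat map on skew-symmetric matrices. -/
noncomputable def vex (A : Matrix (Fin 3) (Fin 3) ℝ) : Fin 3 → ℝ :=
  ![A 2 1, A 0 2, A 1 0]

/-- Normalized Euclidean distance on SO(3). -/
noncomputable def normI (R : Matrix (Fin 3) (Fin 3) ℝ) : ℝ :=
  (1/4) * Matrix.trace (1 - R)

/-- Membership in SO(3). -/
def SO3 (R : Matrix (Fin 3) (Fin 3) ℝ) : Prop :=
  R * Rᵀ = 1 ∧ Rᵀ * R = 1 ∧ R.det = 1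

theorem normI_deriv
    (Rt : ℝ → Matrix (Fin 3) (Fin 3) ℝ) (ω : ℝ → Fin 3 → ℝ)
    (hSO : ∀ t, SO3 (Rt t))
    (hR : ∀ t i j, HasDerivAt (fun s => Rt s i j) ((-(hat (ω t)) * Rt t) i j) t) :
    ∀ t, HasDerivAt (fun s => normI (Rt s))
      (-(1/2) * ∑ i, vex (Pa (Rt t)) i * ω t i) t := by
  intro t
  have h00 := hR t 0 0
  have h11 := hR t 1 1
  have h22 := hR t 2 2
  have h : HasDerivAt (fun s => normI (Rt s))
      ((1/4) * (0 - (((-(hat (ω t)) * Rt t) 0 0 + (-(hat (ω t)) * Rt t) 1 1) +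
        (-(hat (ω t)) * Rt t) 2 2))) t := by
    have heq : (fun s => normI (Rt s))
        = fun s => (1/4) * (3 - ((Rt s 0 0 + Rt s 1 1) + Rt s 2 2)) := by
      funext s
      simp [normI, Matrix.trace, Fin.sum_univ_three, Matrix.one_apply]
    rw [heq]
    exact ((hasDerivAt_const t (3:ℝ)).sub ((h00.add h11).add h22)).const_mul _
  convert h using 1
  simp [Matrix.mul_apply, hat, vex, Pa, Fin.sum_univ_three, Matrix.neg_apply]
  ring
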